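/- Let G ∈ ℂ⟦X⟧ be the exponential generating function G = ∑_{n≥0} ĉ_n^{(k)}(α,a) X^n/n! of the two-parameter Hurwitz-Lerch type poly-Cauchy numbers of the second kind. Then, for every k ∈ ℤ, the formal derivative of G satisfies (1 + X) · G′ = ∑_{n≥0} D̂_n^{(k)}(α,a) X^n/n!, where D̂_n^{(k)}(α,a) = (-1)^{n+1} ∑_{j=0}^{n} [n j] · (α(j+1) + a)^{-k}. -/

import Mathlib

open PowerSeries Finset

/-- Unsigned Stirling numbers of the first kind. -/
def stirling1 : ℕ → ℕ → ℕ
  | 0, 0 => 1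
  | 0, _ + 1 => 0
  | _ + 1, 0 => 0
  | n + 1, m + 1 => stirling1 n m + n * stirling1 n (m + 1)

/-- Stirling numbers of the second kind. -/
def stirling2 : ℕ → ℕ → ℕ
  | 0, 0 => 1
  | 0, _ + 1 => 0
  | _ + 1, 0 => 0
  | n + 1, m + 1 => stirling2 n m + (m + 1) * stirling2 n (m + 1)

/-- Two-parameter Hurwitz-Lerch type poly-Bernoulli numbers
    `B_n^{(k)}(α,a) = (-1)^n ∑_{m=0}^n (-1)^m m! {n m} (αm+a)^{-k}`. -/
noncomputable def polyBernoulli (k : ℤ) (α a : ℂ) (n : ℕ) : ℂ :=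
  (-1 : ℂ) ^ n * ∑ m ∈ Finset.range (n + 1),
    (-1 : ℂ) ^ m * (m.factorial : ℂ) * (stirling2 n m : ℂ) * (α * m + a) ^ (-k)

/-- Two-parameter Hurwitz-Lerch type poly-Cauchy numbers of the first kind
    `c_n^{(k)}(α,a) = (-1)^n ∑_{m=0}^n (-1)^m [n m] (αm+a)^{-k}`. -/
noncomputable def polyCauchy1 (k : ℤ) (α a : ℂ) (n : ℕ) : ℂ :=
  (-1 : ℂ) ^ n * ∑ m ∈ Finset.range (n + 1),
    (-1 : ℂ) ^ m * (stirling1 n m : ℂ) * (α * m + a) ^ (-k)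

/-- Two-parameter Hurwitz-Lerch type poly-Cauchy numbers of the second kind
    `ĉ_n^{(k)}(α,a) = (-1)^n ∑_{m=0}^n [n m] (αm+a)^{-k}`. -/
noncomputable def polyCauchy2 (k : ℤ) (α a : ℂ) (n : ℕ) : ℂ :=
  (-1 : ℂ) ^ n * ∑ m ∈ Finset.range (n + 1),
    (stirling1 n m : ℂ) * (α * m + a) ^ (-k)

/-- The formal power series `log(1+X) = ∑_{j≥1} (-1)^{j-1} X^j / j` in `ℂ⟦X⟧`. -/
noncomputable def formalLog : PowerSeries ℂ :=
  PowerSeries.mk fun j => if j = 0 then 0 else (-1 : ℂ) ^ (j - 1) / j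

lemma stirling1_zero (n : ℕ) : stirling1 (n+1) 0 = 0 := rfl

lemma stirling1_eq_zero : ∀ n m : ℕ, n < m → stirling1 n m = 0
  | 0, m+1, _ => rfl
  | n+1, m+1, h => by
      rw [stirling1, stirling1_eq_zero n m (by omega), stirling1_eq_zero n (m+1) (by omega)]
      simp

lemma key (α a : ℂ) (k : ℤ) (n : ℕ) :
    polyCauchy2 k α a (n+1) + n * polyCauchy2 k α a n
    = (-1 : ℂ)^(n+1) * ∑ j ∈ Finset.range (n+1),
        (stirling1 n j : ℂ) * (α * (j+1) + a) ^ (-k) := by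
  let t : ℕ → ℂ := fun m => (α * m + a) ^ (-k)
  have h1 : ∑ m ∈ range (n+2), (stirling1 (n+1) m : ℂ) * t m
      = ∑ m ∈ range (n+1), (stirling1 n m : ℂ) * t (m+1)
        + n * ∑ m ∈ range (n+1), (stirling1 n m : ℂ) * t m := by
    rw [Finset.sum_range_succ' (fun m => (stirling1 (n+1) m : ℂ) * t m) (n+1)]
    simp only [stirling1_zero, Nat.cast_zero, zero_mul, add_zero]
    have h2 : ∀ m ∈ range (n+1), (stirling1 (n+1) (m+1) : ℂ) * t (m+1)
        = (stirling1 n m : ℂ) * t (m+1) + n * ((stirling1 n (m+1) : ℂ) * t (m+1)) := by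
      intro m _
      rw [stirling1]
      push_cast
      ring
    rw [Finset.sum_congr rfl h2, Finset.sum_add_distrib, ← Finset.mul_sum]
    congr 1
    have h3 : ∑ m ∈ range (n+1), (stirling1 n (m+1) : ℂ) * t (m+1)
        = ∑ m ∈ range (n+2), (stirling1 n m : ℂ) * t m - (stirling1 n 0 : ℂ) * t 0 := by
      rw [Finset.sum_range_succ' (fun m => (stirling1 n m : ℂ) * t m) (n+1)]
      ring
    rw [h3, Finset.sum_range_succ, stirling1_eq_zero n (n+1) (by omega)]
    simp only [Nat.cast_zero, zero_mul, add_zero]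
    cases n with
    | zero => simp
    | succ n => rw [stirling1_zero]; push_cast; ring
  simp only [t] at h1
  unfold polyCauchy2
  rw [h1]
  push_cast
  ring

set_option linter.deprecated false in
lemma coeff_derivativeFun' (f : ℂ⟦X⟧) (n : ℕ) :
    coeff n f.derivativeFun = coeff (n + 1) f * (n + 1) := coeff_derivative f n

set_option linter.deprecated false in
lemma constantCoeff_derivativeFun' (f : ℂ⟦X⟧) :
    constantCoeff f.derivativeFun = coeff 1 f * 1 := by
  simpa using coeff_derivativeFun' f 0

theorem stmt11 (α a : ℂ) (hα : α ≠ 0) (ha : ∀ m : ℕ, α * m + a ≠ 0) (k : ℤ) :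
    (1 + PowerSeries.X) *
        (PowerSeries.mk fun n => polyCauchy2 k α a n / (n.factorial : ℂ)).derivativeFun =
      PowerSeries.mk fun n =>
        ((-1 : ℂ) ^ (n + 1) * ∑ j ∈ Finset.range (n + 1),
          (stirling1 n j : ℂ) * (α * (j + 1) + a) ^ (-k)) /
          (n.factorial : ℂ) := by
  ext n
  rw [add_mul, one_mul, map_add, coeff_mk]
  cases n with
  | zero =>
    rw [← key α a k 0]
    simp [constantCoeff_derivativeFun', polyCauchy2]
  | succ m =>
    rw [coeff_succ_X_mul, coeff_derivativeFun', coeff_derivativeFun', coeff_mk, coeff_mk,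
      ← key α a k (m+1)]
    have hf2 : ((m+1).factorial : ℂ) ≠ 0 := Nat.cast_ne_zero.2 (Nat.factorial_ne_zero _)
    have h2 : ((m : ℂ) + 1 + 1) ≠ 0 := by
      have : (0:ℝ) < (m:ℝ) + 1 + 1 := by positivity
      intro h; exact_mod_cast absurd (congrArg Complex.re h) (by simpa using this.ne')
    rw [show (((m+1+1).factorial : ℕ) : ℂ) = ((m:ℂ)+1+1) * ((m+1).factorial : ℂ) from by
      rw [Nat.factorial_succ]; push_cast; ring]
    field_simp
    push_cast
    ring
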